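/- Let N = (D, s, t) be a network with vertex set V and let L = (P_1, …, P_m), where each P_i is a finite set of pairwise innerly disjoint s–t paths in D. If the total number of paths ∑_{i=1}^m |P_i| is strictly greater than |V| − 2 (the number of vertices other than s and t), then t is reachable, i.e., there exists an L-multicolored s–t path. -/

import Mathlib

/-- The edges of a path given as a list of vertices: the pairs of consecutive vertices. -/
def pathEdges {V : Type*} (l : List V) : List (V × V) := l.zip l.tail

/-- `l` is a path from `s` to `v` in the digraph with edge relation `E`: a list of pairwise
distinct vertices, starting at `s`, ending at `v`, consecutive vertices joined by edges. -/
def IsPath {V : Type*} (E : V → V → Prop) (s v : V) (l : List V) : Prop :=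
  l.Nodup ∧ l.head? = some s ∧ l.getLast? = some v ∧ l.Chain' E

/-- Two `s`–`t` paths are innerly disjoint if they share no vertex other than `s` and `t`. -/
def InnerlyDisjoint {V : Type*} (s t : V) (p q : List V) : Prop :=
  ∀ x ∈ p, x ∈ q → x = s ∨ x = t

/-- Given a family of paths `P` with a coloring `c` into `m` color classes, a path `Q` is
`L`-multicolored if there is an injection assigning to each edge of `Q` a color such that
the edge lies on some path of that color class. -/
def MulticoloredCl {V : Type*} {N m : ℕ} (P : Fin N → List V) (c : Fin N → Fin m)
    (Q : List V) : Prop :=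
  ∃ g : Fin (pathEdges Q).length → Fin m, Function.Injective g ∧
    ∀ e : Fin (pathEdges Q).length, ∃ j : Fin N, c j = g e ∧ (pathEdges Q).get e ∈ pathEdges (P j)

section AuxList

variable {V : Type*}

theorem pathEdges_cons_cons (x y : V) (l : List V) :
    pathEdges (x :: y :: l) = (x, y) :: pathEdges (y :: l) := rfl

theorem mem_pathEdges : ∀ (l : List V) (e : V × V), e ∈ pathEdges l → e.1 ∈ l ∧ e.2 ∈ l
  | [], e, h => by simp [pathEdges] at h
  | [x], e, h => by simp [pathEdges] at h
  | x :: y :: l, e, h => by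
      rw [pathEdges_cons_cons] at h
      rcases List.mem_cons.mp h with h | h
      · subst h; simp
      · have := mem_pathEdges (y :: l) e h
        exact ⟨List.mem_cons_of_mem _ this.1, List.mem_cons_of_mem _ this.2⟩

theorem chain'_pathEdges {R : V → V → Prop} :
    ∀ (l : List V), l.Chain' R → ∀ e ∈ pathEdges l, R e.1 e.2
  | [], _, e, h => by simp [pathEdges] at h
  | [x], _, e, h => by simp [pathEdges] at h
  | x :: y :: l, hc, e, h => by
      rw [pathEdges_cons_cons] at h
      rw [List.Chain', List.isChain_cons_cons] at hc
      rcases List.mem_cons.mp h with h | h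
      · subst h; exact hc.1
      · exact chain'_pathEdges (y :: l) hc.2 e h

theorem nodup_pathEdges : ∀ {l : List V}, l.Nodup → (pathEdges l).Nodup
  | [], _ => by simp [pathEdges]
  | [x], _ => by simp [pathEdges]
  | x :: y :: l, h => by
      rw [pathEdges_cons_cons, List.nodup_cons]
      refine ⟨fun hmem => ?_, nodup_pathEdges (List.nodup_cons.mp h).2⟩
      exact (List.nodup_cons.mp h).1 (mem_pathEdges _ _ hmem).1

theorem pathEdges_prefix : ∀ (l₁ l₂ : List V), pathEdges l₁ <+: pathEdges (l₁ ++ l₂)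
  | [], l₂ => by simp [pathEdges]
  | [x], l₂ => by
      have h : pathEdges [x] = [] := rfl
      rw [h]; exact List.nil_prefix
  | x :: y :: l, l₂ => by
      obtain ⟨r, hr⟩ := pathEdges_prefix (y :: l) l₂
      refine ⟨r, ?_⟩
      simp only [List.cons_append] at hr ⊢
      rw [pathEdges_cons_cons, pathEdges_cons_cons, List.cons_append, hr]

theorem pathEdges_concat : ∀ (l : List V) (u v : V), l.getLast? = some u →
    pathEdges (l ++ [v]) = pathEdges l ++ [(u, v)]
  | [], u, v, h => by simp at h
  | [x], u, v, h => by
      simp only [List.getLast?_singleton, Option.some.injEq] at h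
      subst h; rfl
  | x :: y :: l, u, v, h => by
      rw [List.getLast?_cons_cons] at h
      have ih := pathEdges_concat (y :: l) u v h
      rw [List.cons_append, List.cons_append, pathEdges_cons_cons, ← List.cons_append,
        ih, pathEdges_cons_cons, List.cons_append]

theorem exists_prefix_to_mem (l : List V) :
    ∀ v ∈ l, ∃ l', l' <+: l ∧ l'.head? = l.head? ∧ l'.getLast? = some v := by
  induction l using List.reverseRecOn with
  | nil => intro v hv; cases hv
  | append_singleton l₀ x ih =>
      intro v hv
      rcases List.mem_append.mp hv with h | h
      · have hne : l₀ ≠ [] := List.ne_nil_of_mem h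
        obtain ⟨l', hp, hh, hl⟩ := ih v h
        exact ⟨l', hp.trans ⟨[x], rfl⟩,
          by rw [hh, List.head?_append_of_ne_nil _ hne], hl⟩
      · have hvx : v = x := by simpa using h
        subst hvx
        exact ⟨l₀ ++ [v], List.prefix_refl _, rfl, List.getLast?_concat⟩

theorem exists_crossing (p : V → Prop) : ∀ (l : List V) (a b : V), p a → ¬ p b →
    (a :: l).getLast? = some b →
    ∃ u v, (u, v) ∈ pathEdges (a :: l) ∧ p u ∧ ¬ p v
  | [], a, b, ha, hb, hl => by
      simp only [List.getLast?_singleton, Option.some.injEq] at hl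
      exact absurd (hl ▸ ha) hb
  | y :: l, a, b, ha, hb, hl => by
      rw [List.getLast?_cons_cons] at hl
      by_cases hy : p y
      · obtain ⟨u, v, hm, hu, hv⟩ := exists_crossing p l y b hy hb hl
        exact ⟨u, v, by rw [pathEdges_cons_cons]; exact List.mem_cons_of_mem _ hm, hu, hv⟩
      · exact ⟨a, y, by rw [pathEdges_cons_cons]; exact List.mem_cons_self, ha, hy⟩

end AuxList

section Rainbow

variable {V : Type*} {N m : ℕ}

/-- `Q` is a rainbow (multicolored) path using only colors from `X`. -/
def RainbowA (P : Fin N → List V) (c : Fin N → Fin m) (X : Finset (Fin m)) (Q : List V) : Prop :=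
  ∃ g : V × V → Fin m, Set.InjOn g {e | e ∈ pathEdges Q} ∧
    ∀ e ∈ pathEdges Q, g e ∈ X ∧ ∃ j : Fin N, c j = g e ∧ e ∈ pathEdges (P j)

/-- `v` is reachable from `s` by a rainbow path with colors from `X`. -/
def ReachA (E : V → V → Prop) (s : V) (P : Fin N → List V) (c : Fin N → Fin m)
    (X : Finset (Fin m)) (v : V) : Prop :=
  ∃ Q : List V, IsPath E s v Q ∧ RainbowA P c X Q

variable {E : V → V → Prop} {s t : V} {P : Fin N → List V} {c : Fin N → Fin m}
  {X Y : Finset (Fin m)}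

theorem RainbowA.mono {Q : List V} (h : RainbowA P c X Q) (hXY : X ⊆ Y) :
    RainbowA P c Y Q := by
  obtain ⟨g, hinj, hg⟩ := h
  exact ⟨g, hinj, fun e he => ⟨hXY (hg e he).1, (hg e he).2⟩⟩

theorem ReachA.mono {v : V} (h : ReachA E s P c X v) (hXY : X ⊆ Y) :
    ReachA E s P c Y v := by
  obtain ⟨Q, hQ, hR⟩ := h
  exact ⟨Q, hQ, hR.mono hXY⟩

theorem reachA_source (i₀ : Fin m) : ReachA E s P c X s := by
  refine ⟨[s], ⟨List.nodup_singleton s, rfl, rfl, List.isChain_singleton s⟩,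
    fun _ => i₀, ?_, ?_⟩
  · intro e he
    simp only [Set.mem_setOf_eq] at he
    simp [pathEdges] at he
  · intro e he
    simp [pathEdges] at he

theorem reachA_of_mem {Q : List V} {u v : V} (hQ : IsPath E s u Q) (hR : RainbowA P c X Q)
    (hv : v ∈ Q) : ReachA E s P c X v := by
  obtain ⟨nd, hh, hl, hc⟩ := hQ
  obtain ⟨l', hp, hh', hl'⟩ := exists_prefix_to_mem Q v hv
  have hsub : ∀ e ∈ pathEdges l', e ∈ pathEdges Q := by
    intro e he
    obtain ⟨r, hr⟩ := hp
    have := pathEdges_prefix l' r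
    rw [hr] at this
    exact this.subset he
  refine ⟨l', ⟨nd.sublist hp.sublist, by rw [hh', hh], hl', hc.prefix hp⟩, ?_⟩
  obtain ⟨g, hinj, hg⟩ := hR
  exact ⟨g, hinj.mono (fun e he => hsub e he), fun e he => hg e (hsub e he)⟩

theorem reachA_step {u v : V} {j : Fin N} (hchain : (P j).Chain' E)
    (hedge : (u, v) ∈ pathEdges (P j)) (hcj : c j ∉ X)
    (hu : ReachA E s P c X u) : ReachA E s P c (insert (c j) X) v := by
  classical
  obtain ⟨Q, hQ, hR⟩ := hu
  by_cases hvQ : v ∈ Q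
  · exact (reachA_of_mem hQ hR hvQ).mono (Finset.subset_insert _ _)
  obtain ⟨nd, hh, hl, hc'⟩ := hQ
  have hQne : Q ≠ [] := by intro h; subst h; simp at hh
  have hEuv : E u v := chain'_pathEdges (P j) hchain (u, v) hedge
  have hPE : pathEdges (Q ++ [v]) = pathEdges Q ++ [(u, v)] := pathEdges_concat Q u v hl
  have hnotuv : ∀ e ∈ pathEdges Q, e ≠ (u, v) := by
    intro e he heq
    subst heq
    exact hvQ (mem_pathEdges Q (u, v) he).2
  obtain ⟨g, hinj, hg⟩ := hR
  refine ⟨Q ++ [v], ⟨?_, ?_, ?_, ?_⟩, ?_⟩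
  · rw [List.nodup_append]
    exact ⟨nd, List.nodup_singleton v, fun a ha b hb hab => hvQ (by rw [hab, List.mem_singleton.mp hb] at ha; exact ha)⟩
  · rw [List.head?_append_of_ne_nil _ hQne]; exact hh
  · exact List.getLast?_concat
  · refine hc'.append (List.isChain_singleton v) ?_
    intro x hx y hy
    have hxu : u = x := by
      rw [hl] at hx; simpa using hx
    have hyv : v = y := by simpa using hy
    rw [← hxu, ← hyv]; exact hEuv
  · refine ⟨fun e => if e = (u, v) then c j else g e, ?_, ?_⟩
    · intro e he e' he' hgg
      simp only [Set.mem_setOf_eq, hPE, List.mem_append, List.mem_singleton] at he he'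
      rcases he with he | he <;> rcases he' with he' | he'
      · simp only [if_neg (hnotuv e he), if_neg (hnotuv e' he')] at hgg
        exact hinj he he' hgg
      · subst he'
        simp only [if_neg (hnotuv e he), if_pos rfl] at hgg
        exact absurd ((hg e he).1) (hgg ▸ hcj)
      · subst he
        simp only [if_pos rfl, if_neg (hnotuv e' he')] at hgg
        exact absurd ((hg e' he').1) (hgg.symm ▸ hcj)
      · subst he; subst he'; rfl
    · intro e he
      rw [hPE, List.mem_append, List.mem_singleton] at he
      rcases he with he | he
      · simp only [if_neg (hnotuv e he)]
        exact ⟨Finset.mem_insert_of_mem (hg e he).1, (hg e he).2⟩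
      · subst he
        simp only [if_pos rfl]
        exact ⟨Finset.mem_insert_self _ _, j, rfl, hedge⟩

theorem exists_new_vertex {j : Fin N} (i₀ : Fin m) (hPj : IsPath E s t (P j)) (hcj : c j ∉ X)
    (htX' : ¬ ReachA E s P c (insert (c j) X) t) :
    ∃ v, v ∈ P j ∧ v ≠ s ∧ v ≠ t ∧ ¬ ReachA E s P c X v ∧
      ReachA E s P c (insert (c j) X) v := by
  obtain ⟨nd, hh, hl, hc⟩ := hPj
  have hsX : ReachA E s P c X s := reachA_source i₀
  have htX : ¬ ReachA E s P c X t := fun h => htX' (h.mono (Finset.subset_insert _ _))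
  obtain ⟨l, hPl⟩ : ∃ l, P j = s :: l := by
    cases hPj2 : P j with
    | nil => rw [hPj2] at hh; simp at hh
    | cons a l =>
        rw [hPj2] at hh
        simp only [List.head?_cons, Option.some.injEq] at hh
        exact ⟨l, by rw [hh]⟩
  rw [hPl] at hl
  obtain ⟨u, v, hm, hu, hv⟩ :=
    exists_crossing (fun w => ReachA E s P c X w) l s t hsX htX hl
  rw [← hPl] at hm
  have hstep : ReachA E s P c (insert (c j) X) v := reachA_step hc hm hcj hu
  refine ⟨v, (mem_pathEdges _ _ hm).2, ?_, ?_, hv, hstep⟩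
  · intro hvs; exact hv (by rw [hvs]; exact hsX)
  · intro hvt; exact htX' (by rw [← hvt]; exact hstep)

end Rainbow

/-- In a network `(D, s, t)`, given `L = (P_1, …, P_m)` where each `P_i` is a finite set of
pairwise innerly disjoint `s`–`t` paths (here: `N` paths `P` colored by `c : Fin N → Fin m`,
paths of the same color being distinct and pairwise innerly disjoint), if the total number
of paths exceeds `|V| - 2`, then `t` is reachable: there is an `L`-multicolored `s`–`t` path. -/
theorem sink_reachable {V : Type*} [Fintype V] (E : V → V → Prop) (s t : V) (hst : s ≠ t)
    (hs : ∀ u v, E u v → v ≠ s) (ht : ∀ u v, E u v → u ≠ t)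
    {N m : ℕ} (P : Fin N → List V) (c : Fin N → Fin m)
    (hP : ∀ i, IsPath E s t (P i))
    (hset : ∀ i j, i ≠ j → c i = c j → P i ≠ P j)
    (hdisj : ∀ i j, i ≠ j → c i = c j → InnerlyDisjoint s t (P i) (P j))
    (hbig : Fintype.card V - 2 < N) :
    ∃ Q : List V, IsPath E s t Q ∧ MulticoloredCl P c Q := by
  classical
  have hN : 0 < N := lt_of_le_of_lt (Nat.zero_le _) hbig
  have i₀ : Fin m := c ⟨0, hN⟩
  by_cases hreach : ReachA E s P c Finset.univ t
  · obtain ⟨Q, hQ, g, hinj, hg⟩ := hreach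
    refine ⟨Q, hQ, fun k => g ((pathEdges Q).get k), ?_, fun k => ?_⟩
    · intro k k' hkk'
      have h1 : (pathEdges Q).get k = (pathEdges Q).get k' :=
        hinj (List.get_mem _ _) (List.get_mem _ _) hkk'
      exact (List.Nodup.get_inj_iff (nodup_pathEdges hQ.1)).mp h1
    · exact (hg _ (List.get_mem _ _)).2
  · exfalso
    set Xr : ℕ → Finset (Fin m) := fun r => Finset.univ.filter (fun i => (i : ℕ) < r) with hXr
    have hXmono : ∀ r, Xr r ⊆ Xr (r + 1) := by
      intro r i hi
      rw [hXr, Finset.mem_filter] at hi ⊢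
      exact ⟨hi.1, Nat.lt_succ_of_lt hi.2⟩
    have hnt : ∀ r, ¬ ReachA E s P c (Xr r) t :=
      fun r h => hreach (h.mono (Finset.subset_univ _))
    set F : ℕ → Finset V :=
      fun r => Finset.univ.filter (fun v => ReachA E s P c (Xr r) v) with hF
    have key : ∀ r, (Finset.univ.filter (fun j : Fin N => (c j : ℕ) < r)).card + 1
        ≤ (F r).card := by
      intro r
      induction r with
      | zero =>
          have h0 : (Finset.univ.filter (fun j : Fin N => (c j : ℕ) < 0)) = ∅ := by
            ext j; simp
          rw [h0, Finset.card_empty]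
          have hsF : s ∈ F 0 :=
            Finset.mem_filter.mpr ⟨Finset.mem_univ _, reachA_source i₀⟩
          simpa using Finset.card_pos.mpr ⟨s, hsF⟩
      | succ r ih =>
          set B := Finset.univ.filter (fun j : Fin N => (c j : ℕ) = r) with hB
          have hinsert : ∀ j : Fin N, (c j : ℕ) = r → insert (c j) (Xr r) ⊆ Xr (r + 1) := by
            intro j hj i hi
            rcases Finset.mem_insert.mp hi with hi | hi
            · rw [hXr, Finset.mem_filter]
              exact ⟨Finset.mem_univ _, by rw [hi, hj]; exact Nat.lt_succ_self r⟩
            · exact hXmono r hi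
          have hex : ∀ j : Fin N, (c j : ℕ) = r →
              ∃ v, v ∈ P j ∧ v ≠ s ∧ v ≠ t ∧ ¬ ReachA E s P c (Xr r) v ∧
                ReachA E s P c (insert (c j) (Xr r)) v := by
            intro j hj
            refine exists_new_vertex i₀ (hP j) ?_ ?_
            · rw [hXr, Finset.mem_filter]
              push_neg
              intro _
              simp [hj]
            · intro h
              exact hnt (r + 1) (h.mono (hinsert j hj))
          have hcardB : B.card ≤ (F (r + 1) \ F r).card := by
            refine Finset.card_le_card_of_injOn
              (fun j => if h : (c j : ℕ) = r then Classical.choose (hex j h) else s) ?_ ?_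
            · intro j hjB
              have hj : (c j : ℕ) = r := (Finset.mem_filter.mp hjB).2
              simp only [dif_pos hj]
              obtain ⟨hmem, hns, hnt', hnX, hX'⟩ := Classical.choose_spec (hex j hj)
              refine Finset.mem_sdiff.mpr ⟨?_, ?_⟩
              · exact Finset.mem_filter.mpr ⟨Finset.mem_univ _, hX'.mono (hinsert j hj)⟩
              · intro hmemF
                exact hnX (Finset.mem_filter.mp hmemF).2
            · intro j hjB k hkB heq
              have hj : (c j : ℕ) = r := (Finset.mem_filter.mp (Finset.mem_coe.mp hjB)).2
              have hk : (c k : ℕ) = r := (Finset.mem_filter.mp (Finset.mem_coe.mp hkB)).2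
              have heq2 : Classical.choose (hex j hj) = Classical.choose (hex k hk) := by
                simpa only [dif_pos hj, dif_pos hk] using heq
              by_contra hjk
              have hcolor : c j = c k := Fin.ext (hj.trans hk.symm)
              obtain ⟨hmj, hnsj, hntj, _, _⟩ := Classical.choose_spec (hex j hj)
              obtain ⟨hmk, _, _, _, _⟩ := Classical.choose_spec (hex k hk)
              rcases hdisj j k hjk hcolor _ hmj (heq2 ▸ hmk) with h | h
              · exact hnsj h
              · exact hntj h
          have hsplit : Finset.univ.filter (fun j : Fin N => (c j : ℕ) < r + 1)
              = Finset.univ.filter (fun j : Fin N => (c j : ℕ) < r) ∪ B := by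
            ext j
            simp only [hB, Finset.mem_union, Finset.mem_filter, Finset.mem_univ, true_and]
            omega
          have hdisjAB : Disjoint (Finset.univ.filter (fun j : Fin N => (c j : ℕ) < r)) B := by
            rw [Finset.disjoint_left]
            intro j hjA hjB
            have h1 := (Finset.mem_filter.mp hjA).2
            have h2 := (Finset.mem_filter.mp hjB).2
            omega
          have hFmono : F r ⊆ F (r + 1) := by
            intro v hv
            rw [hF, Finset.mem_filter] at hv ⊢
            exact ⟨hv.1, hv.2.mono (hXmono r)⟩
          have hcards : (F (r + 1) \ F r).card = (F (r + 1)).card - (F r).card :=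
            Finset.card_sdiff_of_subset hFmono
          have hle : (F r).card ≤ (F (r + 1)).card := Finset.card_le_card hFmono
          rw [hsplit, Finset.card_union_of_disjoint hdisjAB]
          omega
    have hall : (Finset.univ.filter (fun j : Fin N => (c j : ℕ) < m)) = Finset.univ := by
      ext j
      simp [(c j).2]
    have hfin := key m
    rw [hall, Finset.card_univ, Fintype.card_fin] at hfin
    have hsub : F m ⊆ Finset.univ.erase t := by
      intro v hv
      refine Finset.mem_erase.mpr ⟨?_, Finset.mem_univ _⟩
      intro hvt
      exact hnt m (hvt ▸ (Finset.mem_filter.mp hv).2)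
    have h2 : (F m).card ≤ Fintype.card V - 1 := by
      have := Finset.card_le_card hsub
      rwa [Finset.card_erase_of_mem (Finset.mem_univ t), Finset.card_univ] at this
    have hV2 : 2 ≤ Fintype.card V := Fintype.one_lt_card_iff_nontrivial.mpr ⟨⟨s, t, hst⟩⟩
    omega
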